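/- Let h : ℝ^d∖{0} → (0,1) be even, homogeneous of degree 0 and C¹ on the sphere S^{d−1}, and let f_h(ξ) = |ξ|^{−2h(ξ)−d}. Let ρ be a Schwartz function on ℝ^{d−1} with Fourier transform ρ̂ normalized so that ∫_{ℝ^{d−1}} |ρ̂(γ)|² dγ = 1, and set R(p) = ∫_{ℝ^{d−1}} f_h(γ, p) |ρ̂(γ)|² dγ. Then for every δ ∈ (0,1), (R(p) − |p|^{−2h(θ0)−d}) · |p|^{2h(θ0)+d+δ} → 0 as |p| → ∞. -/

import Mathlib

open MeasureTheory Filter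

noncomputable section

/-- The point `(γ, p) ∈ ℝ^{m+1}` with `γ ∈ ℝ^m` and last coordinate `p`. -/
def app {m : ℕ} (γ : EuclideanSpace ℝ (Fin m)) (p : ℝ) :
    EuclideanSpace ℝ (Fin (m + 1)) :=
  WithLp.toLp 2 (Fin.snoc (α := fun _ => ℝ) (WithLp.ofLp γ) p)

/-- The direction `θ₀ = (0, …, 0, 1) ∈ ℝ^{m+1}`. -/
def theta0 (m : ℕ) : EuclideanSpace ℝ (Fin (m + 1)) := app 0 1

/-- `g` is homogeneous of degree `0` on `ℝ^n ∖ {0}`. -/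
def Homog0 {n : ℕ} (g : EuclideanSpace ℝ (Fin n) → ℝ) : Prop :=
  ∀ t : ℝ, 0 < t → ∀ ξ : EuclideanSpace ℝ (Fin n), ξ ≠ 0 → g (t • ξ) = g ξ

/-- `g` is even. -/
def EvenFn {n : ℕ} (g : EuclideanSpace ℝ (Fin n) → ℝ) : Prop :=
  ∀ ξ : EuclideanSpace ℝ (Fin n), g (-ξ) = g ξ

/-- `g` is Lipschitz of order `α` on the unit sphere. -/
def LipSphere {n : ℕ} (g : EuclideanSpace ℝ (Fin n) → ℝ) (α : ℝ) : Prop :=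
  ∃ L > (0 : ℝ), ∀ x y : EuclideanSpace ℝ (Fin n), ‖x‖ = 1 → ‖y‖ = 1 →
    |g x - g y| ≤ L * ‖x - y‖ ^ α

/-- `ρ` is rapidly decreasing. -/
def RapidDecay {n : ℕ} (ρ : EuclideanSpace ℝ (Fin n) → ℝ) : Prop :=
  ∀ k : ℕ, ∃ C > (0 : ℝ), ∀ x : EuclideanSpace ℝ (Fin n),
    |ρ x| ≤ C * (1 + ‖x‖) ^ (-(k : ℝ))

/-- The Fourier transform of the window `ρ` on `ℝ^m`. -/
def ftRho {m : ℕ} (ρ : SchwartzMap (EuclideanSpace ℝ (Fin m)) ℝ) :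
    EuclideanSpace ℝ (Fin m) → ℂ :=
  FourierTransform.fourier (fun x => (ρ x : ℂ))

/-- The spectral density `f_h(ξ) = |ξ|^{-2h(ξ)-d}` of an anisotropic fractional
Brownian field in dimension `d = m+1`. -/
def fh {m : ℕ} (h : EuclideanSpace ℝ (Fin (m + 1)) → ℝ)
    (ξ : EuclideanSpace ℝ (Fin (m + 1))) : ℝ :=
  ‖ξ‖ ^ (-2 * h ξ - (m + 1 : ℝ))

/-- The spectral density of the Radon transform: `R(p) = ∫ f_h(γ,p) |ρ̂(γ)|² dγ`. -/
def radonDensity {m : ℕ} (h : EuclideanSpace ℝ (Fin (m + 1)) → ℝ)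
    (ρ : SchwartzMap (EuclideanSpace ℝ (Fin m)) ℝ) (p : ℝ) : ℝ :=
  ∫ γ : EuclideanSpace ℝ (Fin m), fh h (app γ p) * ‖ftRho ρ γ‖ ^ 2

namespace Aux

variable {m : ℕ}

lemma app_last (γ : EuclideanSpace ℝ (Fin m)) (p : ℝ) :
    app γ p (Fin.last m) = p := by simp [app]

lemma norm_app (γ : EuclideanSpace ℝ (Fin m)) (p : ℝ) :
    ‖app γ p‖ = Real.sqrt (‖γ‖ ^ 2 + p ^ 2) := by
  have h1 : ‖γ‖ ^ 2 = ∑ i : Fin m, ‖γ i‖ ^ 2 := by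
    rw [EuclideanSpace.norm_eq, Real.sq_sqrt]
    positivity
  rw [EuclideanSpace.norm_eq, Fin.sum_univ_castSucc]
  congr 1
  simp [app, h1, Real.norm_eq_abs, sq_abs]

lemma norm_app_sq (γ : EuclideanSpace ℝ (Fin m)) (p : ℝ) :
    ‖app γ p‖ ^ 2 = ‖γ‖ ^ 2 + p ^ 2 := by
  rw [norm_app, Real.sq_sqrt]; positivity

lemma abs_le_norm_app (γ : EuclideanSpace ℝ (Fin m)) (p : ℝ) :
    |p| ≤ ‖app γ p‖ := by
  rw [norm_app]
  rw [show |p| = Real.sqrt (p^2) by rw [Real.sqrt_sq_eq_abs]]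
  apply Real.sqrt_le_sqrt; nlinarith [sq_nonneg ‖γ‖]

lemma app_sub (γ γ' : EuclideanSpace ℝ (Fin m)) (p p' : ℝ) :
    app γ p - app γ' p' = app (γ - γ') (p - p') := by
  ext i
  induction i using Fin.lastCases with
  | last => simp [app]
  | cast i => simp [app]

lemma smul_app (c : ℝ) (γ : EuclideanSpace ℝ (Fin m)) (p : ℝ) :
    c • app γ p = app (c • γ) (c * p) := by
  ext i
  induction i using Fin.lastCases with
  | last => simp [app]
  | cast i => simp [app]

lemma neg_app (γ : EuclideanSpace ℝ (Fin m)) (p : ℝ) :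
    -app γ p = app (-γ) (-p) := by
  ext i
  induction i using Fin.lastCases with
  | last => simp [app]
  | cast i => simp [app]

lemma app_ne_zero (γ : EuclideanSpace ℝ (Fin m)) {p : ℝ} (hp : p ≠ 0) :
    app γ p ≠ 0 := by
  intro h
  apply hp
  have := congrArg (fun v => v (Fin.last m)) h
  simpa [app] using this

lemma norm_theta0 : ‖theta0 m‖ = 1 := by
  simp [theta0, norm_app]

lemma theta0_ne_zero : theta0 m ≠ 0 :=
  app_ne_zero 0 one_ne_zero

/-- scalar estimate -/
lemma scalar_est {g n p : ℝ} (hg : 0 ≤ g) (hp : 0 < p) (hn : 0 < n)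
    (hn2 : n ^ 2 = g ^ 2 + p ^ 2) :
    Real.sqrt (g ^ 2 / n ^ 2 + (p / n - 1) ^ 2) ≤ 2 * (g / p) := by
  have hpn1 : p ≤ n := by nlinarith
  have hpn : p / n ≤ 1 := by rw [div_le_one hn]; exact hpn1
  have hpn0 : 0 ≤ p / n := by positivity
  have hsq : (p / n - 1) ^ 2 ≤ 1 - (p / n) ^ 2 := by nlinarith
  have h3 : 1 - (p / n) ^ 2 = g ^ 2 / n ^ 2 := by
    rw [div_pow]
    field_simp
    linarith
  have h4 : g ^ 2 / n ^ 2 ≤ g ^ 2 / p ^ 2 := by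
    apply div_le_div_of_nonneg_left (by positivity) (by positivity)
    nlinarith
  have h5 : g ^ 2 / n ^ 2 + (p / n - 1) ^ 2 ≤ (2 * (g / p)) ^ 2 := by
    have : (2 * (g / p)) ^ 2 = 4 * (g ^ 2 / p ^ 2) := by
      rw [mul_pow, div_pow]; ring
    rw [this]
    have := h3 ▸ hsq
    linarith [h4, le_trans this h4]
  calc Real.sqrt (g ^ 2 / n ^ 2 + (p / n - 1) ^ 2) ≤ Real.sqrt ((2 * (g / p)) ^ 2) :=
        Real.sqrt_le_sqrt h5
    _ = 2 * (g / p) := Real.sqrt_sq (by positivity)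

/-- distance of normalized lift to θ0, for positive last coordinate -/
lemma unit_dist (γ : EuclideanSpace ℝ (Fin m)) {p : ℝ} (hp : 0 < p) :
    ‖(‖app γ p‖⁻¹ • app γ p) - theta0 m‖ ≤ 2 * (‖γ‖ / p) := by
  have hn : (0 : ℝ) < ‖app γ p‖ :=
    lt_of_lt_of_le (by rw [← abs_of_pos hp] at hp; exact hp) (abs_le_norm_app γ p)
  obtain ⟨n, hn_eq⟩ : ∃ n : ℝ, n = ‖app γ p‖ := ⟨_, rfl⟩
  rw [← hn_eq] at hn ⊢
  have hn2 : n ^ 2 = ‖γ‖ ^ 2 + p ^ 2 := by rw [hn_eq]; exact norm_app_sq γ p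
  have hv : n⁻¹ • app γ p = app (n⁻¹ • γ) (n⁻¹ * p) := smul_app n⁻¹ γ p
  rw [hv, theta0, app_sub, sub_zero, norm_app]
  have hns : ‖n⁻¹ • γ‖ ^ 2 = ‖γ‖ ^ 2 / n ^ 2 := by
    rw [norm_smul, Real.norm_eq_abs, abs_of_pos (inv_pos.mpr hn), mul_pow]
    field_simp
  have hq : n⁻¹ * p - 1 = p / n - 1 := by field_simp
  rw [hns, hq]
  exact scalar_est (norm_nonneg γ) hp hn hn2

/-- Lipschitz-type bound for `h` on the unit sphere, centered at `θ0`. -/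
lemma sphere_lip (h : EuclideanSpace ℝ (Fin (m + 1)) → ℝ)
    (hhC1 : ContDiffOn ℝ 1 h {(0 : EuclideanSpace ℝ (Fin (m + 1)))}ᶜ)
    (hhran : ∀ ξ : EuclideanSpace ℝ (Fin (m + 1)), ξ ≠ 0 → h ξ ∈ Set.Ioo (0 : ℝ) 1) :
    ∃ K > (0 : ℝ), ∀ v : EuclideanSpace ℝ (Fin (m + 1)), ‖v‖ = 1 →
      |h v - h (theta0 m)| ≤ K * ‖v - theta0 m‖ := by
  have hmem : {(0 : EuclideanSpace ℝ (Fin (m + 1)))}ᶜ ∈ nhds (theta0 m) :=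
    isOpen_compl_singleton.mem_nhds (by simp [theta0_ne_zero])
  have hC : ContDiffAt ℝ 1 h (theta0 m) := hhC1.contDiffAt hmem
  obtain ⟨K, t, ht, hlip⟩ := hC.exists_lipschitzOnWith
  obtain ⟨r, hr, hball⟩ := Metric.mem_nhds_iff.1 ht
  refine ⟨max (K : ℝ) (1 / r) + 1, by positivity, fun v hv => ?_⟩
  have hH := hhran (theta0 m) theta0_ne_zero
  have hv0 : v ≠ 0 := by intro hv0; rw [hv0] at hv; simp at hv
  have hvr := hhran v hv0
  by_cases hcase : dist v (theta0 m) < r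
  · have h1 : v ∈ t := hball hcase
    have h2 : theta0 m ∈ t := hball (by simp [hr])
    have := hlip.dist_le_mul v h1 (theta0 m) h2
    rw [Real.dist_eq, dist_eq_norm] at this
    refine this.trans ?_
    have : (K : ℝ) ≤ max (K : ℝ) (1 / r) + 1 := le_trans (le_max_left _ _) (by linarith)
    exact mul_le_mul_of_nonneg_right this (norm_nonneg _)
  · push_neg at hcase
    rw [dist_eq_norm] at hcase
    have h1 : |h v - h (theta0 m)| ≤ 1 := by
      rw [abs_le]
      constructor <;> [linarith [hvr.1, hH.2]; linarith [hvr.2, hH.1]]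
    calc |h v - h (theta0 m)| ≤ 1 := h1
      _ = (1 / r) * r := by field_simp
      _ ≤ (max (K : ℝ) (1 / r) + 1) * ‖v - theta0 m‖ := by
          apply mul_le_mul
          · exact le_trans (le_max_right _ _) (by linarith)
          · exact hcase
          · linarith
          · positivity

/-- Key bound: `|h(γ,p) - h(θ0)| ≤ K‖γ‖/|p|`. -/
lemma h_diff_bound (h : EuclideanSpace ℝ (Fin (m + 1)) → ℝ)
    (hheven : EvenFn h) (hhhom : Homog0 h)
    (hhC1 : ContDiffOn ℝ 1 h {(0 : EuclideanSpace ℝ (Fin (m + 1)))}ᶜ)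
    (hhran : ∀ ξ : EuclideanSpace ℝ (Fin (m + 1)), ξ ≠ 0 → h ξ ∈ Set.Ioo (0 : ℝ) 1) :
    ∃ K > (0 : ℝ), ∀ (γ : EuclideanSpace ℝ (Fin m)) (p : ℝ), p ≠ 0 →
      |h (app γ p) - h (theta0 m)| ≤ K * (‖γ‖ / |p|) := by
  obtain ⟨K, hK, hlip⟩ := sphere_lip h hhC1 hhran
  refine ⟨2 * K, by linarith, fun γ p hp => ?_⟩
  have key : ∃ v : EuclideanSpace ℝ (Fin (m + 1)), ‖v‖ = 1 ∧ h v = h (app γ p) ∧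
      ‖v - theta0 m‖ ≤ 2 * (‖γ‖ / |p|) := by
    rcases lt_or_gt_of_ne hp with hneg | hpos
    · -- p < 0 : use the normalized lift of (-γ, -p)
      have hp' : (0 : ℝ) < -p := by linarith
      have hξ0 : app (-γ) (-p) ≠ 0 := app_ne_zero (-γ) (ne_of_gt hp')
      have hn : (0 : ℝ) < ‖app (-γ) (-p)‖ :=
        lt_of_lt_of_le (by rw [abs_of_pos hp']; exact hp') (abs_le_norm_app (-γ) (-p))
      refine ⟨‖app (-γ) (-p)‖⁻¹ • app (-γ) (-p), ?_, ?_, ?_⟩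
      · rw [norm_smul, Real.norm_eq_abs, abs_of_pos (inv_pos.mpr hn)]
        exact inv_mul_cancel₀ (ne_of_gt hn)
      · rw [hhhom _ (inv_pos.mpr hn) _ hξ0]
        rw [show app (-γ) (-p) = -app γ p from by rw [neg_app]]
        exact hheven (app γ p)
      · have := unit_dist (m := m) (-γ) hp'
        rw [norm_neg] at this
        rwa [abs_of_neg hneg]
    · -- p > 0
      have hξ0 : app γ p ≠ 0 := app_ne_zero γ hp
      have hn : (0 : ℝ) < ‖app γ p‖ :=
        lt_of_lt_of_le (by rw [abs_of_pos hpos]; exact hpos) (abs_le_norm_app γ p)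
      refine ⟨‖app γ p‖⁻¹ • app γ p, ?_, ?_, ?_⟩
      · rw [norm_smul, Real.norm_eq_abs, abs_of_pos (inv_pos.mpr hn)]
        exact inv_mul_cancel₀ (ne_of_gt hn)
      · exact hhhom _ (inv_pos.mpr hn) _ hξ0
      · have := unit_dist (m := m) γ hpos
        rwa [abs_of_pos hpos]
  obtain ⟨v, hv1, hv2, hv3⟩ := key
  calc |h (app γ p) - h (theta0 m)| = |h v - h (theta0 m)| := by rw [hv2]
    _ ≤ K * ‖v - theta0 m‖ := hlip v hv1
    _ ≤ K * (2 * (‖γ‖ / |p|)) := mul_le_mul_of_nonneg_left hv3 (le_of_lt hK)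
    _ = 2 * K * (‖γ‖ / |p|) := by ring


set_option maxHeartbeats 2000000 in
/-- Core scalar estimate. -/
lemma scalar_main {d q n g hx H δ K' : ℝ}
    (hd : 2 ≤ d) (hq : 3 ≤ q) (hq4 : (4 * K') ^ 4 ≤ q) (hK' : 1 ≤ K')
    (hn0 : 0 ≤ n) (hn2 : n ^ 2 = g ^ 2 + q ^ 2) (hg : 0 ≤ g)
    (hxI : hx ∈ Set.Ioo (0 : ℝ) 1) (hHI : H ∈ Set.Ioo (0 : ℝ) 1)
    (hclose : |hx - H| ≤ (K' / 2) * (g / q)) (hδ : δ ∈ Set.Ioo (0 : ℝ) 1) :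
    |n ^ (-2 * hx - d) - q ^ (-2 * H - d)| * q ^ (2 * H + d + δ)
      ≤ 2 * K' * g * Real.log q * q ^ (δ - 1) + (d + 2) * g ^ 2 * q ^ (δ - 2)
        + 2 * g ^ 8 * q ^ (-1 : ℝ) := by
  have hq0 : (0 : ℝ) < q := by linarith
  have hq1 : (1 : ℝ) < q := by linarith
  have hlog : (0 : ℝ) < Real.log q := Real.log_pos hq1
  have hnq : q ≤ n := by nlinarith
  have hn0' : (0 : ℝ) < n := lt_of_lt_of_le hq0 hnq
  have hn1 : (1 : ℝ) ≤ n := by linarith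
  -- notation
  obtain ⟨s, hs_def⟩ : ∃ s : ℝ, s = g / q := ⟨_, rfl⟩
  have hs0 : 0 ≤ s := by rw [hs_def]; positivity
  obtain ⟨t, ht_def⟩ : ∃ t : ℝ, t = n / q := ⟨_, rfl⟩
  have ht0 : (0 : ℝ) < t := by rw [ht_def]; positivity
  have ht1 : (1 : ℝ) ≤ t := by rw [ht_def, le_div_iff₀ hq0]; linarith
  have ht2 : t ^ 2 = 1 + s ^ 2 := by
    rw [ht_def, hs_def, div_pow, div_pow, hn2]
    field_simp
    ring
  have hP0 : (0 : ℝ) ≤ q ^ (2 * H + d + δ) := Real.rpow_nonneg hq0.le _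
  by_cases hcase : K' * s * Real.log q ≤ 1
  · -- main region
    obtain ⟨a, ha_def⟩ : ∃ a : ℝ, a = Real.log q * (2 * (H - hx)) := ⟨_, rfl⟩
    obtain ⟨c, hc_def⟩ : ∃ c : ℝ, c = t ^ (-2 * hx - d) := ⟨_, rfl⟩
    have hc0 : (0 : ℝ) ≤ c := hc_def ▸ Real.rpow_nonneg ht0.le _
    have hc1 : c ≤ 1 := hc_def ▸
      Real.rpow_le_one_of_one_le_of_nonpos ht1 (by nlinarith [hxI.1])
    have habs_a : |a| ≤ K' * s * Real.log q := by
      rw [ha_def, abs_mul, abs_of_pos hlog]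
      have habs2 : |2 * (H - hx)| = 2 * |hx - H| := by
        rw [abs_mul, abs_sub_comm]
        simp [abs_of_nonneg]
      rw [habs2]
      have hclose' : |hx - H| ≤ K' / 2 * s := by rw [hs_def]; exact hclose
      calc Real.log q * (2 * |hx - H|) ≤ Real.log q * (2 * (K' / 2 * s)) := by
            apply mul_le_mul_of_nonneg_left _ hlog.le
            linarith
        _ = K' * s * Real.log q := by ring
    have ha1 : |a| ≤ 1 := habs_a.trans hcase
    -- key identity
    have hnqt : n = q * t := by rw [ht_def]; field_simp
    have step1 : n ^ (-2 * hx - d) = q ^ (-2 * hx - d) * c := by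
      rw [hnqt, Real.mul_rpow hq0.le ht0.le, ← hc_def]
    have step2 : q ^ (-2 * hx - d) * q ^ (2 * H + d + δ) = q ^ δ * Real.exp a := by
      rw [← Real.rpow_add hq0]
      have : -2 * hx - d + (2 * H + d + δ) = δ + 2 * (H - hx) := by ring
      rw [this, Real.rpow_add hq0]
      congr 1
      rw [Real.rpow_def_of_pos hq0, ha_def]
    have step3 : q ^ (-2 * H - d) * q ^ (2 * H + d + δ) = q ^ δ := by
      rw [← Real.rpow_add hq0]
      congr 1
      ring
    have main_eq : |n ^ (-2 * hx - d) - q ^ (-2 * H - d)| * q ^ (2 * H + d + δ)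
        = q ^ δ * |Real.exp a * c - 1| := by
      rw [← abs_of_nonneg hP0, ← abs_mul, step1]
      have key : (q ^ (-2 * hx - d) * c - q ^ (-2 * H - d)) * q ^ (2 * H + d + δ)
          = q ^ δ * (Real.exp a * c - 1) := by
        calc (q ^ (-2 * hx - d) * c - q ^ (-2 * H - d)) * q ^ (2 * H + d + δ)
            = (q ^ (-2 * hx - d) * q ^ (2 * H + d + δ)) * c
              - q ^ (-2 * H - d) * q ^ (2 * H + d + δ) := by ring
          _ = (q ^ δ * Real.exp a) * c - q ^ δ := by rw [step2, step3]
          _ = q ^ δ * (Real.exp a * c - 1) := by ring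
      rw [key, abs_mul, abs_of_nonneg (Real.rpow_nonneg hq0.le δ)]
    rw [main_eq]
    -- bound |exp a * c - 1|
    have hexp : |Real.exp a - 1| ≤ 2 * |a| := Real.abs_exp_sub_one_le ha1
    have h1c : 1 - c ≤ (d + 2) * s ^ 2 := by
      have hlt : (0 : ℝ) ≤ Real.log t := Real.log_nonneg ht1
      have hcexp : c = Real.exp (-((2 * hx + d) * Real.log t)) := by
        rw [hc_def, Real.rpow_def_of_pos ht0]
        congr 1; ring
      have h2 : 1 - c ≤ (2 * hx + d) * Real.log t := by
        rw [hcexp]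
        have := Real.add_one_le_exp (-((2 * hx + d) * Real.log t))
        linarith
      have h3 : Real.log t ≤ t - 1 := by
        have := Real.log_le_sub_one_of_pos ht0
        linarith
      have h4 : t - 1 ≤ s ^ 2 := by nlinarith
      have h5 : 0 < 2 * hx + d := by nlinarith [hxI.1]
      have h6 : 2 * hx + d ≤ d + 2 := by nlinarith [hxI.2]
      calc 1 - c ≤ (2 * hx + d) * Real.log t := h2
        _ ≤ (2 * hx + d) * (s ^ 2) := by
            apply mul_le_mul_of_nonneg_left _ h5.le
            linarith
        _ ≤ (d + 2) * s ^ 2 := by nlinarith [sq_nonneg s]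
    have hcomb : |Real.exp a * c - 1| ≤ 2 * (K' * s * Real.log q) + (d + 2) * s ^ 2 := by
      have hdec : Real.exp a * c - 1 = (Real.exp a - 1) * c + (c - 1) := by ring
      calc |Real.exp a * c - 1| ≤ |(Real.exp a - 1) * c| + |c - 1| := by
            rw [hdec]; exact abs_add_le _ _
        _ = |Real.exp a - 1| * c + (1 - c) := by
            rw [abs_mul, abs_of_nonneg hc0, abs_sub_comm c 1, abs_of_nonneg (by linarith : (0:ℝ) ≤ 1 - c)]
        _ ≤ 2 * |a| * 1 + (d + 2) * s ^ 2 := by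
            have := mul_le_mul hexp hc1 hc0 (by positivity : (0:ℝ) ≤ 2 * |a|)
            linarith [h1c]
        _ ≤ 2 * (K' * s * Real.log q) + (d + 2) * s ^ 2 := by
            have := habs_a
            linarith
    have hfin : q ^ δ * (2 * (K' * s * Real.log q) + (d + 2) * s ^ 2)
        = 2 * K' * g * Real.log q * q ^ (δ - 1) + (d + 2) * g ^ 2 * q ^ (δ - 2) := by
      have e1 : q ^ (δ - 1) = q ^ δ * q⁻¹ := by
        rw [Real.rpow_sub hq0, Real.rpow_one, div_eq_mul_inv]
      have e2 : q ^ (δ - 2) = q ^ δ * (q⁻¹ * q⁻¹) := by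
        rw [Real.rpow_sub hq0, show (2:ℝ) = ((2:ℕ):ℝ) by norm_num, Real.rpow_natCast]
        rw [div_eq_mul_inv, sq, mul_inv]
      rw [e1, e2, hs_def, div_eq_mul_inv]
      have hq' : q ≠ 0 := ne_of_gt hq0
      ring
    have hterm3 : (0 : ℝ) ≤ 2 * g ^ 8 * q ^ (-1 : ℝ) := by positivity
    calc q ^ δ * |Real.exp a * c - 1|
        ≤ q ^ δ * (2 * (K' * s * Real.log q) + (d + 2) * s ^ 2) := by
          apply mul_le_mul_of_nonneg_left hcomb (Real.rpow_nonneg hq0.le δ)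
      _ = 2 * K' * g * Real.log q * q ^ (δ - 1) + (d + 2) * g ^ 2 * q ^ (δ - 2) := hfin
      _ ≤ _ := by linarith
  · -- tail region
    push_neg at hcase
    have hK'0 : (0 : ℝ) < K' := by linarith
    -- log q ≤ 4 q^{1/4}
    have hlog4 : Real.log q ≤ 4 * q ^ ((4 : ℝ)⁻¹) := by
      have h1 : Real.log (q ^ ((4 : ℝ)⁻¹)) = (4 : ℝ)⁻¹ * Real.log q := Real.log_rpow hq0 _
      have h2 : Real.log (q ^ ((4 : ℝ)⁻¹)) ≤ q ^ ((4 : ℝ)⁻¹) - 1 :=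
        Real.log_le_sub_one_of_pos (Real.rpow_pos_of_pos hq0 _)
      nlinarith [Real.rpow_pos_of_pos hq0 ((4 : ℝ)⁻¹)]
    -- 4K' ≤ q^{1/4}
    have h4K : 4 * K' ≤ q ^ ((4 : ℝ)⁻¹) := by
      have h0 : (0 : ℝ) ≤ 4 * K' := by linarith
      have := Real.rpow_le_rpow (by positivity) hq4 (by norm_num : (0:ℝ) ≤ (4:ℝ)⁻¹)
      rwa [← Real.rpow_natCast (4 * K') 4, ← Real.rpow_mul h0, show ((4:ℕ):ℝ) * (4:ℝ)⁻¹ = 1 by norm_num,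
        Real.rpow_one] at this
    have hhalf : q ^ ((4 : ℝ)⁻¹) * q ^ ((4 : ℝ)⁻¹) = q ^ ((2 : ℝ)⁻¹) := by
      rw [← Real.rpow_add hq0]; norm_num
    have hKl : K' * Real.log q ≤ q ^ ((2 : ℝ)⁻¹) := by
      calc K' * Real.log q ≤ K' * (4 * q ^ ((4 : ℝ)⁻¹)) :=
            mul_le_mul_of_nonneg_left hlog4 hK'0.le
        _ = (4 * K') * q ^ ((4 : ℝ)⁻¹) := by ring
        _ ≤ q ^ ((4 : ℝ)⁻¹) * q ^ ((4 : ℝ)⁻¹) :=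
            mul_le_mul_of_nonneg_right h4K (Real.rpow_nonneg hq0.le _)
        _ = q ^ ((2 : ℝ)⁻¹) := hhalf
    -- g > sqrt q
    have hgq : q ^ ((2 : ℝ)⁻¹) ≤ g := by
      have hKlog : (0 : ℝ) < K' * Real.log q := by positivity
      have h3 : q / (K' * Real.log q) ≤ g := by
        rw [div_le_iff₀ hKlog]
        have h2 := le_of_lt hcase
        rw [hs_def] at h2
        have h3' := mul_le_mul_of_nonneg_right h2 hq0.le
        rw [one_mul] at h3'
        have h4 : K' * (g / q) * Real.log q * q = g * (K' * Real.log q) := by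
          field_simp
        rw [h4] at h3'
        exact h3'
      have h4 : q ^ ((2 : ℝ)⁻¹) ≤ q / (K' * Real.log q) := by
        have hq2 : q ^ ((2 : ℝ)⁻¹) * q ^ ((2 : ℝ)⁻¹) = q := by
          rw [← Real.rpow_add hq0]; norm_num
        rw [le_div_iff₀ (by positivity)]
        calc q ^ ((2 : ℝ)⁻¹) * (K' * Real.log q) ≤ q ^ ((2 : ℝ)⁻¹) * q ^ ((2 : ℝ)⁻¹) :=
              mul_le_mul_of_nonneg_left hKl (Real.rpow_nonneg hq0.le _)
          _ = q := hq2
      linarith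
    have hg8 : q ^ (4 : ℝ) ≤ g ^ 8 := by
      have h1 : (q ^ ((2 : ℝ)⁻¹)) ^ (8 : ℕ) ≤ g ^ 8 :=
        pow_le_pow_left₀ (Real.rpow_nonneg hq0.le _) hgq 8
      rwa [← Real.rpow_natCast (q ^ ((2:ℝ)⁻¹)) 8, ← Real.rpow_mul hq0.le,
        show (2:ℝ)⁻¹ * ((8:ℕ):ℝ) = 4 by norm_num] at h1
    -- crude bound on the difference
    have hb1 : n ^ (-2 * hx - d) ≤ q ^ (-d) := by
      have h1 : n ^ (-2 * hx - d) ≤ n ^ (-d) :=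
        Real.rpow_le_rpow_of_exponent_le hn1 (by nlinarith [hxI.1])
      have h2 : n ^ (-d) ≤ q ^ (-d) := by
        rw [Real.rpow_neg hn0, Real.rpow_neg hq0.le]
        apply inv_anti₀ (Real.rpow_pos_of_pos hq0 d)
        exact Real.rpow_le_rpow hq0.le hnq (by linarith)
      linarith
    have hb2 : q ^ (-2 * H - d) ≤ q ^ (-d) :=
      Real.rpow_le_rpow_of_exponent_le hq1.le (by nlinarith [hHI.1])
    have hb3 : |n ^ (-2 * hx - d) - q ^ (-2 * H - d)| ≤ 2 * q ^ (-d) := by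
      rw [abs_sub_le_iff]
      constructor
      · have := Real.rpow_nonneg hq0.le (-2 * H - d); linarith
      · have := Real.rpow_nonneg hn0 (-2 * hx - d); linarith
    have hb4 : q ^ (-d) * q ^ (2 * H + d + δ) = q ^ (2 * H + δ) := by
      rw [← Real.rpow_add hq0]; ring_nf
    have hb5 : q ^ (2 * H + δ) ≤ q ^ (3 : ℝ) :=
      Real.rpow_le_rpow_of_exponent_le hq1.le (by nlinarith [hHI.2, hδ.2])
    have hb6 : q ^ (3 : ℝ) = q ^ (4 : ℝ) * q ^ (-1 : ℝ) := by
      rw [← Real.rpow_add hq0]; norm_num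
    calc |n ^ (-2 * hx - d) - q ^ (-2 * H - d)| * q ^ (2 * H + d + δ)
        ≤ 2 * q ^ (-d) * q ^ (2 * H + d + δ) := by
          apply mul_le_mul_of_nonneg_right hb3 hP0
      _ = 2 * q ^ (2 * H + δ) := by rw [mul_assoc, hb4]
      _ ≤ 2 * q ^ (3 : ℝ) := by linarith
      _ = 2 * (q ^ (4 : ℝ) * q ^ (-1 : ℝ)) := by rw [hb6]
      _ ≤ 2 * (g ^ 8 * q ^ (-1 : ℝ)) := by
          apply mul_le_mul_of_nonneg_left _ (by norm_num)
          exact mul_le_mul_of_nonneg_right hg8 (Real.rpow_nonneg hq0.le _)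
      _ ≤ _ := by
          have h1 : (0:ℝ) ≤ 2 * K' * g * Real.log q * q ^ (δ - 1) := by positivity
          have h2 : (0:ℝ) ≤ (d + 2) * g ^ 2 * q ^ (δ - 2) := by positivity
          linarith


/-- complexification of a real Schwartz function -/
def cplx (ρ : SchwartzMap (EuclideanSpace ℝ (Fin m)) ℝ) :
    SchwartzMap (EuclideanSpace ℝ (Fin m)) ℂ where
  toFun x := (ρ x : ℂ)
  smooth' := Complex.ofRealCLM.contDiff.comp ρ.smooth'
  decay' := by
    intro k n
    obtain ⟨C, hC⟩ := ρ.decay' k n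
    refine ⟨C, fun x => ?_⟩
    have heq : ‖iteratedFDeriv ℝ n (fun x => ((ρ x : ℝ) : ℂ)) x‖
        = ‖iteratedFDeriv ℝ n ρ x‖ := by
      have : (fun x => ((ρ x : ℝ) : ℂ)) = Complex.ofRealLI ∘ ρ := rfl
      rw [this]
      exact Complex.ofRealLI.norm_iteratedFDeriv_comp_left ρ.smooth'.contDiffAt (by exact_mod_cast le_top)
    rw [heq]
    exact hC x

lemma ftRho_eq (ρ : SchwartzMap (EuclideanSpace ℝ (Fin m)) ℝ) :
    ftRho ρ = ⇑(SchwartzMap.fourierTransformCLE ℝ _ (cplx ρ)) := by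
  rw [show SchwartzMap.fourierTransformCLE ℝ (SchwartzMap (EuclideanSpace ℝ (Fin m)) ℂ)
    = FourierTransform.fourierCLE ℝ _ from rfl, FourierTransform.fourierCLE_apply]
  rfl

/-- moments of the square of a Schwartz function are integrable -/
lemma schwartz_sq_moment (S : SchwartzMap (EuclideanSpace ℝ (Fin m)) ℂ) (k : ℕ) :
    Integrable (fun γ : EuclideanSpace ℝ (Fin m) => ‖γ‖ ^ k * ‖S γ‖ ^ 2) := by
  obtain ⟨C, hCpos, hC⟩ := S.decay 0 0
  have hbound : ∀ x, ‖S x‖ ≤ C := by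
    intro x
    have := hC x
    simpa [norm_iteratedFDeriv_zero] using this
  have hcont : Continuous fun γ : EuclideanSpace ℝ (Fin m) => ‖γ‖ ^ k * ‖S γ‖ ^ 2 :=
    (continuous_norm.pow k).mul ((S.continuous.norm).pow 2)
  apply Integrable.mono ((S.integrable_pow_mul volume k).const_mul C)
    hcont.aestronglyMeasurable
  filter_upwards with x
  have h1 : ‖x‖ ^ k * ‖S x‖ ^ 2 ≤ C * (‖x‖ ^ k * ‖S x‖) := by
    have h2 : ‖S x‖ * ‖S x‖ ≤ C * ‖S x‖ :=
      mul_le_mul_of_nonneg_right (hbound x) (norm_nonneg _)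
    calc ‖x‖ ^ k * ‖S x‖ ^ 2 = ‖x‖ ^ k * (‖S x‖ * ‖S x‖) := by ring
      _ ≤ ‖x‖ ^ k * (C * ‖S x‖) := by
          apply mul_le_mul_of_nonneg_left h2 (by positivity)
      _ = C * (‖x‖ ^ k * ‖S x‖) := by ring
  have hnn : (0:ℝ) ≤ ‖x‖ ^ k * ‖S x‖ ^ 2 := by positivity
  rw [Real.norm_eq_abs, abs_of_nonneg hnn, Real.norm_eq_abs]
  exact h1.trans (le_abs_self _)

lemma continuous_app (p : ℝ) :
    Continuous fun γ : EuclideanSpace ℝ (Fin m) => app γ p := by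
  have hsnoc : Continuous fun f : Fin m → ℝ => (Fin.snoc f p : Fin (m + 1) → ℝ) := by
    apply continuous_pi
    intro i
    refine Fin.lastCases ?_ ?_ i
    · simp only [Fin.snoc_last]
      exact continuous_const
    · intro j
      simp only [Fin.snoc_castSucc]
      exact continuous_apply j
  exact Continuous.comp (PiLp.continuous_toLp 2 fun _ : Fin (m+1) => ℝ)
    (hsnoc.comp (PiLp.continuous_ofLp 2 fun _ : Fin m => ℝ))

lemma continuous_fh_comp (h : EuclideanSpace ℝ (Fin (m + 1)) → ℝ)
    (hhC1 : ContDiffOn ℝ 1 h {(0 : EuclideanSpace ℝ (Fin (m + 1)))}ᶜ)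
    {p : ℝ} (hp : p ≠ 0) :
    Continuous fun γ : EuclideanSpace ℝ (Fin m) => fh h (app γ p) := by
  have hmem : ∀ γ : EuclideanSpace ℝ (Fin m),
      app γ p ∈ {(0 : EuclideanSpace ℝ (Fin (m + 1)))}ᶜ :=
    fun γ => Set.mem_compl_singleton_iff.mpr (app_ne_zero γ hp)
  have hch : Continuous fun γ : EuclideanSpace ℝ (Fin m) => h (app γ p) :=
    (hhC1.continuousOn.comp_continuous (continuous_app p) hmem)
  have hnorm : Continuous fun γ : EuclideanSpace ℝ (Fin m) => ‖app γ p‖ :=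
    continuous_norm.comp (continuous_app p)
  have hpos : ∀ γ : EuclideanSpace ℝ (Fin m), (0:ℝ) < ‖app γ p‖ := fun γ =>
    lt_of_lt_of_le (abs_pos.mpr hp) (abs_le_norm_app γ p)
  have heq : (fun γ : EuclideanSpace ℝ (Fin m) => fh h (app γ p))
      = fun γ => Real.exp (Real.log ‖app γ p‖ * (-2 * h (app γ p) - (m + 1 : ℝ))) := by
    funext γ
    rw [fh, Real.rpow_def_of_pos (hpos γ)]
  rw [heq]
  apply Real.continuous_exp.comp
  apply Continuous.mul
  · apply (Real.continuousOn_log).comp_continuous hnorm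
    intro γ
    exact Set.mem_compl_singleton_iff.mpr (ne_of_gt (hpos γ))
  · exact (continuous_const.mul hch).sub continuous_const


/-- integrability of the spectral integrand -/
lemma integrable_fh_mul (h : EuclideanSpace ℝ (Fin (m + 1)) → ℝ)
    (hhC1 : ContDiffOn ℝ 1 h {(0 : EuclideanSpace ℝ (Fin (m + 1)))}ᶜ)
    (hhran : ∀ ξ : EuclideanSpace ℝ (Fin (m + 1)), ξ ≠ 0 → h ξ ∈ Set.Ioo (0 : ℝ) 1)
    {p : ℝ} (hp1 : 1 ≤ |p|) (S : SchwartzMap (EuclideanSpace ℝ (Fin m)) ℂ) :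
    Integrable (fun γ : EuclideanSpace ℝ (Fin m) => fh h (app γ p) * ‖S γ‖ ^ 2) := by
  have hp : p ≠ 0 := by intro hh; rw [hh] at hp1; simp at hp1; linarith
  have hcont : Continuous fun γ : EuclideanSpace ℝ (Fin m) => fh h (app γ p) * ‖S γ‖ ^ 2 :=
    (continuous_fh_comp h hhC1 hp).mul ((S.continuous.norm).pow 2)
  have hint : Integrable (fun γ : EuclideanSpace ℝ (Fin m) => ‖γ‖ ^ 0 * ‖S γ‖ ^ 2) :=
    schwartz_sq_moment S 0
  apply Integrable.mono hint hcont.aestronglyMeasurable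
  filter_upwards with γ
  have hfh0 : (0 : ℝ) ≤ fh h (app γ p) := Real.rpow_nonneg (norm_nonneg _) _
  have hfh1 : fh h (app γ p) ≤ 1 := by
    apply Real.rpow_le_one_of_one_le_of_nonpos
    · exact le_trans hp1 (abs_le_norm_app γ p)
    · have := (hhran (app γ p) (app_ne_zero γ hp)).1
      have hm0 : (0 : ℝ) ≤ (m + 1 : ℝ) := by positivity
      linarith
  have hw0 : (0 : ℝ) ≤ ‖S γ‖ ^ 2 := by positivity
  rw [Real.norm_eq_abs, Real.norm_eq_abs, abs_of_nonneg (by positivity),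
    abs_of_nonneg (by positivity : (0:ℝ) ≤ ‖γ‖ ^ 0 * ‖S γ‖ ^ 2)]
  calc fh h (app γ p) * ‖S γ‖ ^ 2 ≤ 1 * ‖S γ‖ ^ 2 :=
        mul_le_mul_of_nonneg_right hfh1 hw0
    _ = ‖γ‖ ^ 0 * ‖S γ‖ ^ 2 := by simp

end Aux

set_option maxHeartbeats 2000000 in
theorem statement17 (m : ℕ) (hm : 1 ≤ m)
    (h : EuclideanSpace ℝ (Fin (m + 1)) → ℝ)
    (hheven : EvenFn h) (hhhom : Homog0 h)
    (hhC1 : ContDiffOn ℝ 1 h {(0 : EuclideanSpace ℝ (Fin (m + 1)))}ᶜ)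
    (hhran : ∀ ξ : EuclideanSpace ℝ (Fin (m + 1)), ξ ≠ 0 → h ξ ∈ Set.Ioo (0 : ℝ) 1)
    (ρ : SchwartzMap (EuclideanSpace ℝ (Fin m)) ℝ)
    (hρnorm : ∫ γ : EuclideanSpace ℝ (Fin m), ‖ftRho ρ γ‖ ^ 2 = 1) :
    ∀ δ ∈ Set.Ioo (0 : ℝ) 1,
      Tendsto (fun p : ℝ =>
          (radonDensity h ρ p - |p| ^ (-2 * h (theta0 m) - (m + 1 : ℝ))) *
            |p| ^ (2 * h (theta0 m) + (m + 1 : ℝ) + δ))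
        (cocompact ℝ) (nhds 0) := by
  intro δ hδ
  have hd : (2 : ℝ) ≤ (m + 1 : ℝ) := by
    have : (1 : ℝ) ≤ (m : ℝ) := by exact_mod_cast hm
    linarith
  have hHI : h (theta0 m) ∈ Set.Ioo (0 : ℝ) 1 := hhran _ Aux.theta0_ne_zero
  obtain ⟨K, hKpos, hK⟩ := Aux.h_diff_bound h hheven hhhom hhC1 hhran
  obtain ⟨K', hK'_def⟩ : ∃ K' : ℝ, K' = 2 * K + 1 := ⟨_, rfl⟩
  have hK'1 : (1 : ℝ) ≤ K' := by rw [hK'_def]; linarith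
  -- the Fourier transform of ρ as a Schwartz function
  obtain ⟨S, hS⟩ : ∃ S : SchwartzMap (EuclideanSpace ℝ (Fin m)) ℂ, ftRho ρ = ⇑S :=
    ⟨_, Aux.ftRho_eq ρ⟩
  rw [hS] at hρnorm
  -- moments
  have I0 : Integrable (fun γ : EuclideanSpace ℝ (Fin m) => ‖γ‖ ^ 0 * ‖S γ‖ ^ 2) :=
    Aux.schwartz_sq_moment S 0
  have I1 : Integrable (fun γ : EuclideanSpace ℝ (Fin m) => ‖γ‖ ^ 1 * ‖S γ‖ ^ 2) :=
    Aux.schwartz_sq_moment S 1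
  have I2 : Integrable (fun γ : EuclideanSpace ℝ (Fin m) => ‖γ‖ ^ 2 * ‖S γ‖ ^ 2) :=
    Aux.schwartz_sq_moment S 2
  have I8 : Integrable (fun γ : EuclideanSpace ℝ (Fin m) => ‖γ‖ ^ 8 * ‖S γ‖ ^ 2) :=
    Aux.schwartz_sq_moment S 8
  obtain ⟨M1, hM1⟩ : ∃ M1 : ℝ, M1 = ∫ γ : EuclideanSpace ℝ (Fin m), ‖γ‖ ^ 1 * ‖S γ‖ ^ 2 :=
    ⟨_, rfl⟩
  obtain ⟨M2, hM2⟩ : ∃ M2 : ℝ, M2 = ∫ γ : EuclideanSpace ℝ (Fin m), ‖γ‖ ^ 2 * ‖S γ‖ ^ 2 :=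
    ⟨_, rfl⟩
  obtain ⟨M8, hM8⟩ : ∃ M8 : ℝ, M8 = ∫ γ : EuclideanSpace ℝ (Fin m), ‖γ‖ ^ 8 * ‖S γ‖ ^ 2 :=
    ⟨_, rfl⟩
  obtain ⟨p0, hp0_def⟩ : ∃ p0 : ℝ, p0 = max 3 ((4 * K') ^ 4) := ⟨_, rfl⟩
  -- the comparison function
  obtain ⟨G, hG_def⟩ : ∃ G : ℝ → ℝ, G = fun q =>
      2 * K' * M1 * (Real.log q * q ^ (δ - 1)) + ((m + 1 : ℝ) + 2) * M2 * q ^ (δ - 2)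
        + 2 * M8 * q ^ (-1 : ℝ) := ⟨_, rfl⟩
  -- G tends to 0 at infinity
  have htG : Tendsto G atTop (nhds 0) := by
    have t1 : Tendsto (fun q : ℝ => Real.log q * q ^ (δ - 1)) atTop (nhds 0) := by
      have h1 : (0 : ℝ) < 1 - δ := by linarith [hδ.2]
      have h2 := (isLittleO_log_rpow_atTop h1).tendsto_div_nhds_zero
      apply h2.congr'
      filter_upwards [eventually_gt_atTop (0 : ℝ)] with q hq
      have h3 : q ^ (δ - 1) = (q ^ (1 - δ))⁻¹ := by
        rw [show δ - 1 = -(1 - δ) by ring, Real.rpow_neg hq.le]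
      rw [h3, div_eq_mul_inv]
    have t2 : Tendsto (fun q : ℝ => q ^ (δ - 2)) atTop (nhds 0) := by
      have := tendsto_rpow_neg_atTop (by linarith [hδ.2] : (0 : ℝ) < 2 - δ)
      simpa [show -(2 - δ) = δ - 2 by ring] using this
    have t3 : Tendsto (fun q : ℝ => q ^ (-1 : ℝ)) atTop (nhds 0) :=
      tendsto_rpow_neg_atTop one_pos
    have := ((t1.const_mul (2 * K' * M1)).add
      (t2.const_mul (((m + 1 : ℝ) + 2) * M2))).add (t3.const_mul (2 * M8))
    rw [hG_def]
    simpa using this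
  have hcomp : Tendsto (fun p : ℝ => G |p|) (cocompact ℝ) (nhds 0) := by
    have h1 : Tendsto (fun p : ℝ => |p|) (cocompact ℝ) atTop := by
      have := tendsto_norm_cocompact_atTop (E := ℝ)
      exact this
    exact htG.comp h1
  -- the main pointwise bound
  have hbound : ∀ p : ℝ, p0 ≤ |p| →
      ‖(radonDensity h ρ p - |p| ^ (-2 * h (theta0 m) - (m + 1 : ℝ))) *
        |p| ^ (2 * h (theta0 m) + (m + 1 : ℝ) + δ)‖ ≤ G |p| := by
    intro p hp0
    rw [hp0_def] at hp0
    have hq3 : (3 : ℝ) ≤ |p| := le_trans (le_max_left _ _) hp0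
    have hq4 : (4 * K') ^ 4 ≤ |p| := le_trans (le_max_right _ _) hp0
    have hq1 : (1 : ℝ) ≤ |p| := by linarith
    have hq0 : (0 : ℝ) < |p| := by linarith
    have hp : p ≠ 0 := by intro hh; rw [hh] at hq3; simp at hq3; linarith
    -- integrability
    have Ifh : Integrable (fun γ : EuclideanSpace ℝ (Fin m) =>
        fh h (app γ p) * ‖S γ‖ ^ 2) := Aux.integrable_fh_mul h hhC1 hhran hq1 S
    have Iw : Integrable (fun γ : EuclideanSpace ℝ (Fin m) => ‖S γ‖ ^ 2) := by
      simpa using I0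
    have Ic : Integrable (fun γ : EuclideanSpace ℝ (Fin m) =>
        |p| ^ (-2 * h (theta0 m) - (m + 1 : ℝ)) * ‖S γ‖ ^ 2) :=
      Iw.const_mul _
    -- the difference as an integral
    have hrad : radonDensity h ρ p = ∫ γ : EuclideanSpace ℝ (Fin m),
        fh h (app γ p) * ‖S γ‖ ^ 2 := by
      rw [radonDensity]
      congr 1
      funext γ
      rw [hS]
    have diff_eq : radonDensity h ρ p - |p| ^ (-2 * h (theta0 m) - (m + 1 : ℝ))
        = ∫ γ : EuclideanSpace ℝ (Fin m),
            (fh h (app γ p) - |p| ^ (-2 * h (theta0 m) - (m + 1 : ℝ))) * ‖S γ‖ ^ 2 := by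
      have hsplit : ∀ γ : EuclideanSpace ℝ (Fin m),
          (fh h (app γ p) - |p| ^ (-2 * h (theta0 m) - (m + 1 : ℝ))) * ‖S γ‖ ^ 2
            = fh h (app γ p) * ‖S γ‖ ^ 2
              - |p| ^ (-2 * h (theta0 m) - (m + 1 : ℝ)) * ‖S γ‖ ^ 2 := by
        intro γ; ring
      rw [hrad]
      rw [show (∫ γ : EuclideanSpace ℝ (Fin m),
          (fh h (app γ p) - |p| ^ (-2 * h (theta0 m) - (m + 1 : ℝ))) * ‖S γ‖ ^ 2)
          = ∫ γ : EuclideanSpace ℝ (Fin m),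
            (fh h (app γ p) * ‖S γ‖ ^ 2
              - |p| ^ (-2 * h (theta0 m) - (m + 1 : ℝ)) * ‖S γ‖ ^ 2) from by
        congr 1; funext γ; exact hsplit γ]
      rw [integral_sub Ifh Ic, integral_const_mul, hρnorm, mul_one]
    -- multiply by the weight
    have hmul : (radonDensity h ρ p - |p| ^ (-2 * h (theta0 m) - (m + 1 : ℝ))) *
        |p| ^ (2 * h (theta0 m) + (m + 1 : ℝ) + δ)
        = ∫ γ : EuclideanSpace ℝ (Fin m),
            ((fh h (app γ p) - |p| ^ (-2 * h (theta0 m) - (m + 1 : ℝ))) * ‖S γ‖ ^ 2) *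
              |p| ^ (2 * h (theta0 m) + (m + 1 : ℝ) + δ) := by
      rw [diff_eq, ← integral_mul_const]
    rw [hmul]
    -- the dominating function
    have IB : Integrable (fun γ : EuclideanSpace ℝ (Fin m) =>
        2 * K' * Real.log |p| * |p| ^ (δ - 1) * (‖γ‖ ^ 1 * ‖S γ‖ ^ 2)
          + ((m + 1 : ℝ) + 2) * |p| ^ (δ - 2) * (‖γ‖ ^ 2 * ‖S γ‖ ^ 2)
          + 2 * |p| ^ (-1 : ℝ) * (‖γ‖ ^ 8 * ‖S γ‖ ^ 2)) :=
      ((I1.const_mul _).add (I2.const_mul _)).add (I8.const_mul _)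
    have hptwise : ∀ γ : EuclideanSpace ℝ (Fin m),
        ‖((fh h (app γ p) - |p| ^ (-2 * h (theta0 m) - (m + 1 : ℝ))) * ‖S γ‖ ^ 2) *
          |p| ^ (2 * h (theta0 m) + (m + 1 : ℝ) + δ)‖
        ≤ 2 * K' * Real.log |p| * |p| ^ (δ - 1) * (‖γ‖ ^ 1 * ‖S γ‖ ^ 2)
          + ((m + 1 : ℝ) + 2) * |p| ^ (δ - 2) * (‖γ‖ ^ 2 * ‖S γ‖ ^ 2)
          + 2 * |p| ^ (-1 : ℝ) * (‖γ‖ ^ 8 * ‖S γ‖ ^ 2) := by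
      intro γ
      have hw0 : (0 : ℝ) ≤ ‖S γ‖ ^ 2 := by positivity
      have hP0 : (0 : ℝ) ≤ |p| ^ (2 * h (theta0 m) + (m + 1 : ℝ) + δ) :=
        Real.rpow_nonneg hq0.le _
      have hn2 : ‖app γ p‖ ^ 2 = ‖γ‖ ^ 2 + |p| ^ 2 := by
        rw [Aux.norm_app_sq, sq_abs]
      have hxI : h (app γ p) ∈ Set.Ioo (0 : ℝ) 1 := hhran _ (Aux.app_ne_zero γ hp)
      have hclose : |h (app γ p) - h (theta0 m)| ≤ K' / 2 * (‖γ‖ / |p|) := by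
        refine (hK γ p hp).trans ?_
        apply mul_le_mul_of_nonneg_right _ (by positivity)
        rw [hK'_def]; linarith
      have hscalar := Aux.scalar_main hd hq3 hq4 hK'1 (norm_nonneg (app γ p)) hn2
        (norm_nonneg γ) hxI hHI hclose hδ
      have hfh_eq : fh h (app γ p)
          = ‖app γ p‖ ^ (-2 * h (app γ p) - (m + 1 : ℝ)) := rfl
      rw [Real.norm_eq_abs, abs_mul, abs_mul, abs_of_nonneg hw0, abs_of_nonneg hP0]
      calc |fh h (app γ p) - |p| ^ (-2 * h (theta0 m) - (m + 1 : ℝ))| * ‖S γ‖ ^ 2 *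
            |p| ^ (2 * h (theta0 m) + (m + 1 : ℝ) + δ)
          = (|fh h (app γ p) - |p| ^ (-2 * h (theta0 m) - (m + 1 : ℝ))| *
              |p| ^ (2 * h (theta0 m) + (m + 1 : ℝ) + δ)) * ‖S γ‖ ^ 2 := by ring
        _ ≤ (2 * K' * ‖γ‖ * Real.log |p| * |p| ^ (δ - 1)
              + ((m + 1 : ℝ) + 2) * ‖γ‖ ^ 2 * |p| ^ (δ - 2)
              + 2 * ‖γ‖ ^ 8 * |p| ^ (-1 : ℝ)) * ‖S γ‖ ^ 2 := by
            apply mul_le_mul_of_nonneg_right _ hw0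
            rw [hfh_eq]
            exact hscalar
        _ = 2 * K' * Real.log |p| * |p| ^ (δ - 1) * (‖γ‖ ^ 1 * ‖S γ‖ ^ 2)
              + ((m + 1 : ℝ) + 2) * |p| ^ (δ - 2) * (‖γ‖ ^ 2 * ‖S γ‖ ^ 2)
              + 2 * |p| ^ (-1 : ℝ) * (‖γ‖ ^ 8 * ‖S γ‖ ^ 2) := by ring
    have hnormint := norm_integral_le_of_norm_le IB
      (Eventually.of_forall hptwise)
    refine hnormint.trans ?_
    -- compute the integral of the dominating function
    have J1 : Integrable (fun γ : EuclideanSpace ℝ (Fin m) =>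
        2 * K' * Real.log |p| * |p| ^ (δ - 1) * (‖γ‖ ^ 1 * ‖S γ‖ ^ 2)) := I1.const_mul _
    have J2 : Integrable (fun γ : EuclideanSpace ℝ (Fin m) =>
        ((m + 1 : ℝ) + 2) * |p| ^ (δ - 2) * (‖γ‖ ^ 2 * ‖S γ‖ ^ 2)) := I2.const_mul _
    have J8 : Integrable (fun γ : EuclideanSpace ℝ (Fin m) =>
        2 * |p| ^ (-1 : ℝ) * (‖γ‖ ^ 8 * ‖S γ‖ ^ 2)) := I8.const_mul _
    have J12 : Integrable (fun γ : EuclideanSpace ℝ (Fin m) =>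
        2 * K' * Real.log |p| * |p| ^ (δ - 1) * (‖γ‖ ^ 1 * ‖S γ‖ ^ 2)
          + ((m + 1 : ℝ) + 2) * |p| ^ (δ - 2) * (‖γ‖ ^ 2 * ‖S γ‖ ^ 2)) := J1.add J2
    rw [integral_add J12 J8, integral_add J1 J2,
      integral_const_mul, integral_const_mul, integral_const_mul]
    rw [hG_def, ← hM1, ← hM2, ← hM8]
    apply le_of_eq
    ring
  -- conclude
  have hev : ∀ᶠ p : ℝ in cocompact ℝ, p0 ≤ |p| := by
    have h1 : Tendsto (fun p : ℝ => |p|) (cocompact ℝ) atTop := by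
      have := tendsto_norm_cocompact_atTop (E := ℝ)
      exact this
    exact h1.eventually (eventually_ge_atTop p0)
  exact squeeze_zero_norm' (hev.mono fun p hp => hbound p hp) hcomp
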